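/- Let s ≥ 1, k ≥ s + 1, ω₁,…,ω_{s+1} ∈ ℂ pairwise distinct, η ∈ ℂ^{s+1}, and fix an index i. Define ω̃ ∈ ℂ^s by deleting ω_i from ω, and η̃_j = η_j - 2/(ω_j - ω_i) for j ≠ i. Then the map p ↦ p/(x - ω_i)² is a linear isomorphism from { p ∈ Z(η, ω; s+1, k) : p(ω_i) = 0 } onto Z(η̃, ω̃; s, k-2); consequently dim Z(η, ω; s+1, k) ≤ dim Z(η̃, ω̃; s, k-2) + 1. -/

import Mathlib

open Polynomial

/-- The space `Z(η, ω; s, k)` of polynomials of degree at most `k` with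
`p'(ωᵢ) = ηᵢ p(ωᵢ)` for all `i`. -/
noncomputable def Zspace {s : ℕ} (η ω : Fin s → ℂ) (k : ℕ) :
    Submodule ℂ (Polynomial ℂ) where
  carrier := {p | p.degree ≤ (k : ℕ) ∧
    ∀ i, (derivative p).eval (ω i) = η i * p.eval (ω i)}
  add_mem' := by
    rintro a b ⟨ha1, ha2⟩ ⟨hb1, hb2⟩
    refine ⟨le_trans (degree_add_le a b) (max_le ha1 hb1), fun i => ?_⟩
    simp [ha2 i, hb2 i, mul_add]
  zero_mem' := by simp
  smul_mem' := by
    rintro c a ⟨ha1, ha2⟩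
    refine ⟨le_trans (degree_smul_le c a) ha1, fun i => ?_⟩
    simp [ha2 i]
    ring


theorem stmt18 (s k : ℕ) (hs : 1 ≤ s) (hk : s + 1 ≤ k)
    (η ω : Fin (s + 1) → ℂ) (hω : Function.Injective ω) (i : Fin (s + 1))
    (ηt ωt : Fin s → ℂ) (hωt : ωt = fun j => ω (i.succAbove j))
    (hηt : ηt = fun j => η (i.succAbove j) - 2 / (ω (i.succAbove j) - ω i)) :
    Set.BijOn (fun p : Polynomial ℂ => p /ₘ ((X - C (ω i)) ^ 2))
        {p | p ∈ Zspace η ω k ∧ p.eval (ω i) = 0}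
        (Zspace ηt ωt (k - 2) : Set (Polynomial ℂ)) ∧
      Module.finrank ℂ (Zspace η ω k) ≤ Module.finrank ℂ (Zspace ηt ωt (k - 2)) + 1 := by
  have hk2 : 2 ≤ k := le_trans (by omega) hk
  set d : ℂ[X] := (X - C (ω i)) ^ 2 with hd
  have hdm : d.Monic := (monic_X_sub_C _).pow 2
  have hdd : d.natDegree = 2 := by
    simp [hd, natDegree_pow]
  have hne : ∀ j : Fin s, ω (i.succAbove j) - ω i ≠ 0 := fun j =>
    sub_ne_zero.2 fun h => Fin.succAbove_ne i j (hω h)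
  -- derivative of d
  have hdd' : derivative d = C 2 * (X - C (ω i)) := by
    simp [hd, derivative_pow]
  -- forward: p ∈ LHS set implies d ∣ p and quotient in RHS
  have hdvd : ∀ p : ℂ[X], p ∈ Zspace η ω k → p.eval (ω i) = 0 → d ∣ p := by
    intro p hp h0
    have h1 : (derivative p).eval (ω i) = 0 := by rw [hp.2 i, h0, mul_zero]
    obtain ⟨q, rfl⟩ := dvd_iff_isRoot.2 h0
    have : q.eval (ω i) = 0 := by simpa using h1
    obtain ⟨r, rfl⟩ := dvd_iff_isRoot.2 this
    exact ⟨r, by ring⟩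
  have hcancel : ∀ q : ℂ[X], (d * q) /ₘ d = q := fun q =>
    mul_divByMonic_cancel_left q hdm
  have hrecon : ∀ p : ℂ[X], d ∣ p → d * (p /ₘ d) = p := by
    intro p h
    conv_rhs => rw [← modByMonic_add_div p d]
    rw [(modByMonic_eq_zero_iff_dvd hdm).2 h, zero_add]
  -- membership of d * q in Zspace η ω k given q in Zspace ηt ωt (k-2)
  have hmulmem : ∀ q : ℂ[X], q ∈ Zspace ηt ωt (k - 2) → d * q ∈ Zspace η ω k ∧
      (d * q).eval (ω i) = 0 := by
    intro q hq
    obtain ⟨hq1, hq2⟩ := hq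
    have heval0 : (d * q).eval (ω i) = 0 := by simp [hd]
    refine ⟨⟨?_, ?_⟩, heval0⟩
    · refine le_trans (degree_mul_le d q) ?_
      have hdle : d.degree ≤ (2 : ℕ) := degree_le_natDegree.trans (by rw [hdd])
      calc d.degree + q.degree ≤ (2 : ℕ) + ((k - 2 : ℕ) : WithBot ℕ) :=
            add_le_add hdle hq1
        _ = ((2 + (k - 2) : ℕ) : WithBot ℕ) := by push_cast; ring
        _ = (k : WithBot ℕ) := by congr 1; omega
    · intro j
      rcases eq_or_ne j i with rfl | hji
      · simp [heval0, derivative_mul, hdd', hd, derivative_X_sub_C_sq]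
      · obtain ⟨l, rfl⟩ := Fin.exists_succAbove_eq hji
        have h2 := hq2 l
        simp only [hηt, hωt] at h2
        set w := ω (i.succAbove l)
        have hc : w - ω i ≠ 0 := hne l
        rw [derivative_mul, hdd']
        simp only [eval_add, eval_mul, eval_sub, eval_C, eval_X, eval_pow, hd]
        field_simp [hc] at h2
        linear_combination (w - ω i) * h2
  have hquotmem : ∀ p : ℂ[X], p ∈ Zspace η ω k → p.eval (ω i) = 0 →
      p /ₘ d ∈ Zspace ηt ωt (k - 2) := by
    intro p hp h0
    obtain ⟨q, hpq⟩ := hdvd p hp h0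
    rw [hpq, hcancel]
    obtain ⟨hp1, hp2⟩ := hp
    constructor
    · rcases eq_or_ne q 0 with rfl | hq0
      · simp
      have hp0 : p ≠ 0 := by
        rw [hpq]; exact mul_ne_zero hdm.ne_zero hq0
      have hnat : p.natDegree ≤ k := natDegree_le_iff_degree_le.2 hp1
      have : p.natDegree = 2 + q.natDegree := by
        rw [hpq, natDegree_mul hdm.ne_zero hq0, hdd]
      refine natDegree_le_iff_degree_le.1 ?_
      omega
    · intro j
      have h2 := hp2 (i.succAbove j)
      rw [hpq] at h2
      simp only [hηt, hωt]
      obtain ⟨c, hcdef⟩ : ∃ c, ω (i.succAbove j) - ω i = c := ⟨_, rfl⟩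
      have hc : c ≠ 0 := hcdef ▸ hne j
      rw [derivative_mul, hdd'] at h2
      simp only [eval_add, eval_mul, eval_sub, eval_C, eval_X, eval_pow, hd] at h2
      rw [hcdef] at h2 ⊢
      have h2' : 2 * eval (ω (i.succAbove j)) q + c * eval (ω (i.succAbove j)) (derivative q)
          = η (i.succAbove j) * (c * eval (ω (i.succAbove j)) q) :=
        mul_left_cancel₀ hc (by linear_combination h2)
      field_simp [hc]
      linear_combination h2'
  have hbij : Set.BijOn (fun p : ℂ[X] => p /ₘ d)
      {p | p ∈ Zspace η ω k ∧ p.eval (ω i) = 0}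
      (Zspace ηt ωt (k - 2) : Set ℂ[X]) := by
    refine ⟨fun p hp => hquotmem p hp.1 hp.2, fun p hp p' hp' he => ?_, fun q hq => ?_⟩
    · have := hrecon p (hdvd p hp.1 hp.2)
      rw [← this, ← hrecon p' (hdvd p' hp'.1 hp'.2)]
      simp only at he
      rw [he]
    · exact ⟨d * q, hmulmem q hq, hcancel q⟩
  refine ⟨hbij, ?_⟩
  -- finite dimensionality
  have hfin : ∀ (m : ℕ) (η' ω' : Fin m → ℂ) (k' : ℕ),
      FiniteDimensional ℂ (Zspace η' ω' k') := by
    intro m η' ω' k'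
    have : FiniteDimensional ℂ (degreeLT ℂ (k' + 1)) :=
      LinearEquiv.finiteDimensional (degreeLTEquiv ℂ (k' + 1)).symm
    refine Submodule.finiteDimensional_of_le (S₂ := degreeLT ℂ (k' + 1)) ?_
    intro p hp
    rw [mem_degreeLT]
    exact lt_of_le_of_lt hp.1 (by exact_mod_cast WithBot.coe_lt_coe.2 (Nat.lt_succ_self k'))
  haveI := hfin (s+1) η ω k
  haveI := hfin s ηt ωt (k-2)
  -- evaluation functional on Zspace η ω k
  set φ : (Zspace η ω k) →ₗ[ℂ] ℂ := (leval (ω i)).comp (Zspace η ω k).subtype with hφ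
  have hrk := LinearMap.finrank_range_add_finrank_ker φ
  have hrange : Module.finrank ℂ (LinearMap.range φ) ≤ 1 := by
    have := Submodule.finrank_le (LinearMap.range φ)
    simpa using this
  -- ker φ ≃ Zspace ηt ωt (k-2)
  have hker : Module.finrank ℂ (LinearMap.ker φ) = Module.finrank ℂ (Zspace ηt ωt (k - 2)) := by
    have hg : ∀ q : ℂ[X], q ∈ Zspace ηt ωt (k - 2) → d * q ∈ Zspace η ω k :=
      fun q hq => (hmulmem q hq).1
    set g : (Zspace ηt ωt (k - 2)) →ₗ[ℂ] (Zspace η ω k) :=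
      LinearMap.codRestrict (Zspace η ω k)
        ((LinearMap.mulLeft ℂ d).comp (Zspace ηt ωt (k - 2)).subtype)
        (fun q => hg q q.2) with hgdef
    have hgval : ∀ q : (Zspace ηt ωt (k - 2)), ((g q : ℂ[X])) = d * q := fun q => rfl
    set f : (Zspace ηt ωt (k - 2)) →ₗ[ℂ] (LinearMap.ker φ) :=
      LinearMap.codRestrict (LinearMap.ker φ) g (fun q => by
        rw [LinearMap.mem_ker, hφ]
        simp only [LinearMap.comp_apply, Submodule.subtype_apply, hgval, leval_apply]
        exact (hmulmem q q.2).2) with hfdef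
    have hfbij : Function.Bijective f := by
      constructor
      · intro a b hab
        have h1 : ((f a : Zspace η ω k) : ℂ[X]) = ((f b : Zspace η ω k) : ℂ[X]) := by
          rw [hab]
        have : d * (a : ℂ[X]) = d * (b : ℂ[X]) := h1
        exact Subtype.ext (mul_left_cancel₀ hdm.ne_zero this)
      · rintro ⟨⟨p, hp⟩, hp0⟩
        have hp0' : p.eval (ω i) = 0 := by
          simpa [hφ] using hp0
        refine ⟨⟨p /ₘ d, hquotmem p hp hp0'⟩, ?_⟩
        apply Subtype.ext
        apply Subtype.ext
        exact hrecon p (hdvd p hp hp0')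
    have e : (Zspace ηt ωt (k - 2)) ≃ₗ[ℂ] LinearMap.ker φ := LinearEquiv.ofBijective f hfbij
    exact (LinearEquiv.finrank_eq e).symm
  omega
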